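/- Let H be a discrete abelian group and A a C*-algebra. Given an H-grading (A_g)_{g∈H} of A, there is a unique strongly continuous action γ of the Pontryagin dual group Ĥ on A by *-automorphisms such that γ_χ(a) = χ(g)·a for all g ∈ H and a ∈ A_g. -/

import Mathlib

open scoped Pointwise DirectSum


/-- A `G`-grading of a closed subspace `S` of a C*-algebra `A`: closed subspaces `part g`
spanning a dense subspace of `S`, with `part g * part h ⊆ part (g*h)`,
`(part g)* = part g⁻¹`, `part 1` a C*-subalgebra, together with a positive norm-decreasing
conditional expectation onto `part 1`. Taking `S = ⊤` gives a `G`-grading of `A` itself. -/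
structure GradedCStar (G : Type*) [Group G] (A : Type*) [NonUnitalCStarAlgebra A]
    [PartialOrder A] [StarOrderedRing A] (S : Submodule ℂ A) where
  part : G → Submodule ℂ A
  part_le : ∀ g, part g ≤ S
  closed : ∀ g, IsClosed (part g : Set A)
  mul_mem : ∀ {g h : G} {a b : A}, a ∈ part g → b ∈ part h → a * b ∈ part (g * h)
  star_mem : ∀ {g : G} {a : A}, a ∈ part g → star a ∈ part g⁻¹
  span_dense : (⨆ g, part g).topologicalClosure = S
  E : A →ₗ[ℂ] A
  E_pos : ∀ a ∈ S, 0 ≤ a → 0 ≤ E a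
  E_norm : ∀ a ∈ S, ‖E a‖ ≤ ‖a‖
  E_mem : ∀ a ∈ S, E a ∈ part 1
  E_id : ∀ a ∈ part 1, E a = a
  E_zero : ∀ {g : G}, g ≠ 1 → ∀ a ∈ part g, E a = 0

section Comb
variable {H : Type*} [CommMonoid H] [DecidableEq H]

theorem mem_pow_rep (K : Finset H) :
    ∀ m, ∀ x ∈ K ^ m, ∃ f : H → ℕ, (∀ k, f k ≤ m) ∧ x = ∏ k ∈ K, k ^ f k := by
  intro m
  induction m with
  | zero =>
    intro x hx
    rw [pow_zero, Finset.mem_one] at hx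
    exact ⟨fun _ => 0, fun _ => le_refl _, by simp [hx]⟩
  | succ m ih =>
    intro x hx
    rw [pow_succ, Finset.mem_mul] at hx
    obtain ⟨y, hy, z, hz, rfl⟩ := hx
    obtain ⟨f, hf, rfl⟩ := ih y hy
    refine ⟨Function.update f z (f z + 1), fun k => ?_, ?_⟩
    · rcases eq_or_ne k z with rfl | hk
      · rw [Function.update_self]; exact Nat.succ_le_succ (hf k)
      · rw [Function.update_of_ne hk]; exact (hf k).trans (Nat.le_succ m)
    · have hfun : (fun k => k ^ Function.update f z (f z + 1) k) =
          Function.update (fun k => k ^ f k) z (z ^ (f z + 1)) := by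
        funext k
        rcases eq_or_ne k z with rfl | hk
        · simp
        · rw [Function.update_of_ne hk, Function.update_of_ne hk]
      rw [hfun, Finset.prod_update_of_mem hz,
        ← Finset.mul_prod_erase K (fun k => k ^ f k) hz, pow_succ, mul_right_comm, Finset.erase_eq]

theorem card_pow_le (K : Finset H) (m : ℕ) : (K ^ m).card ≤ (m + 1) ^ K.card := by
  have hsurj : Set.SurjOn (fun f : K → Fin (m + 1) => ∏ k ∈ K.attach, (k : H) ^ (f k : ℕ))
      (Finset.univ : Finset (K → Fin (m + 1))) (K ^ m : Finset H) := by
    intro x hx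
    obtain ⟨f, hf, rfl⟩ := mem_pow_rep K m x hx
    refine ⟨fun k => ⟨f k, Nat.lt_succ_of_le (hf k)⟩, Finset.mem_coe.2 (Finset.mem_univ _), ?_⟩
    simp only
    rw [← Finset.prod_attach K (fun k => k ^ f k)]
  calc (K ^ m).card ≤ (Finset.univ : Finset (K → Fin (m + 1))).card :=
        Finset.card_le_card_of_surjOn _ hsurj
    _ = (m + 1) ^ K.card := by
        rw [Finset.card_univ, Fintype.card_fun, Fintype.card_fin, Fintype.card_coe]

end Comb
section Ssum
variable {H : Type*} [CommGroup H]
variable {A : Type*} [NonUnitalCStarAlgebra A] [PartialOrder A] [StarOrderedRing A]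

/-- twisted sum of components -/
noncomputable def Ssum (χ : H →* Circle) (s : Finset H) (c : H → A) : A :=
  ∑ g ∈ s, (χ g : ℂ) • c g

theorem Ssum_one (s : Finset H) (c : H → A) :
    Ssum (1 : H →* Circle) s c = ∑ g ∈ s, c g := by
  simp [Ssum]

variable (gr : GradedCStar H A ⊤)

theorem norm_comp_le {c : H → A} (hc : ∀ g, c g ∈ gr.part g) {s : Finset H} {k : H}
    (hk : k ∈ s) : ‖c k‖ ≤ ‖∑ g ∈ s, c g‖ := by
  have hE : gr.E (star (c k) * ∑ g ∈ s, c g) = star (c k) * c k := by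
    rw [Finset.mul_sum, map_sum, Finset.sum_eq_single k]
    · refine gr.E_id _ ?_
      have := gr.mul_mem (gr.star_mem (hc k)) (hc k)
      rwa [inv_mul_cancel] at this
    · intro g _ hne
      refine gr.E_zero (g := k⁻¹ * g) ?_ _ (gr.mul_mem (gr.star_mem (hc k)) (hc g))
      simp only [ne_eq, inv_mul_eq_one]
      exact fun h => hne h.symm
    · intro h; exact absurd hk h
  rcases eq_or_lt_of_le (norm_nonneg (c k)) with h0 | h0
  · rw [← h0]; exact norm_nonneg _
  have h2 : ‖c k‖ * ‖c k‖ ≤ ‖c k‖ * ‖∑ g ∈ s, c g‖ := by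
    calc ‖c k‖ * ‖c k‖ = ‖star (c k) * c k‖ := (CStarRing.norm_star_mul_self).symm
      _ = ‖gr.E (star (c k) * ∑ g ∈ s, c g)‖ := by rw [hE]
      _ ≤ ‖star (c k) * ∑ g ∈ s, c g‖ := gr.E_norm _ trivial
      _ ≤ ‖star (c k)‖ * ‖∑ g ∈ s, c g‖ := norm_mul_le _ _
      _ = ‖c k‖ * ‖∑ g ∈ s, c g‖ := by rw [norm_star]
  exact le_of_mul_le_mul_left h2 h0

variable [DecidableEq H]

/-- convolution of component functions -/
noncomputable def convF (s t : Finset H) (c d : H → A) (k : H) : A :=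
  ∑ p ∈ (s ×ˢ t).filter (fun p => p.1 * p.2 = k), c p.1 * d p.2

theorem convF_mem {c d : H → A} (hc : ∀ g, c g ∈ gr.part g) (hd : ∀ g, d g ∈ gr.part g)
    (s t : Finset H) (k : H) : convF s t c d k ∈ gr.part k := by
  refine Submodule.sum_mem _ fun p hp => ?_
  rw [Finset.mem_filter] at hp
  exact hp.2 ▸ gr.mul_mem (hc p.1) (hd p.2)

theorem Ssum_mul (χ : H →* Circle) (s t : Finset H) (c d : H → A) :
    Ssum χ s c * Ssum χ t d = Ssum χ (s * t) (convF s t c d) := by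
  rw [Ssum, Ssum, Ssum, Finset.sum_mul_sum]
  have lhs : ∀ g ∈ s, ∀ h ∈ t,
      ((χ g : ℂ) • c g) * ((χ h : ℂ) • d h) = (χ (g * h) : ℂ) • (c g * d h) := by
    intro g _ h _
    rw [smul_mul_smul_comm, map_mul, Circle.coe_mul]
  rw [Finset.sum_congr rfl fun g hg => Finset.sum_congr rfl fun h ht => lhs g hg h ht]
  rw [← Finset.sum_product']
  rw [← Finset.sum_fiberwise_of_maps_to (g := fun p : H × H => p.1 * p.2) (t := s * t)
    (fun p hp => Finset.mul_mem_mul (Finset.mem_product.1 hp).1 (Finset.mem_product.1 hp).2)]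
  refine Finset.sum_congr rfl fun k _ => ?_
  rw [convF, Finset.smul_sum]
  refine Finset.sum_congr rfl fun p hp => ?_
  rw [Finset.mem_filter] at hp
  rw [hp.2]

theorem Ssum_star (χ : H →* Circle) (s : Finset H) (c : H → A) :
    star (Ssum χ s c) = Ssum χ s⁻¹ (fun g => star (c g⁻¹)) := by
  rw [Ssum, star_sum, Ssum, Finset.sum_inv_index]
  refine Finset.sum_congr rfl fun g _ => ?_
  rw [star_smul, inv_inv]
  congr 1
  rw [map_inv, Circle.coe_inv_eq_conj]
  rfl

end Ssum
section Iter
variable {H : Type*} [CommGroup H] [DecidableEq H]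
variable {A : Type*} [NonUnitalCStarAlgebra A] [PartialOrder A] [StarOrderedRing A]
variable (gr : GradedCStar H A ⊤)

/-- iterated support sets -/
noncomputable def itT (s : Finset H) : ℕ → Finset H
  | 0 => s⁻¹ * s
  | n + 1 => itT s n * itT s n

/-- iterated component functions -/
noncomputable def itC (s : Finset H) (c : H → A) : ℕ → (H → A)
  | 0 => convF s⁻¹ s (fun g => star (c g⁻¹)) c
  | n + 1 => convF (itT s n) (itT s n) (itC s c n) (itC s c n)

theorem itC_mem {c : H → A} (hc : ∀ g, c g ∈ gr.part g) (s : Finset H) :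
    ∀ n k, itC s c n k ∈ gr.part k := by
  intro n
  induction n with
  | zero =>
    refine convF_mem gr (fun g => ?_) hc s⁻¹ s
    have := gr.star_mem (hc g⁻¹)
    rwa [inv_inv] at this
  | succ n ih => exact convF_mem gr ih ih _ _

theorem itS_zero (χ : H →* Circle) (s : Finset H) (c : H → A) :
    Ssum χ (itT s 0) (itC s c 0) = star (Ssum χ s c) * Ssum χ s c := by
  rw [Ssum_star, itT, itC, Ssum_mul]

theorem itS_succ (χ : H →* Circle) (s : Finset H) (c : H → A) (n : ℕ) :
    Ssum χ (itT s (n + 1)) (itC s c (n + 1)) =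
      Ssum χ (itT s n) (itC s c n) * Ssum χ (itT s n) (itC s c n) := by
  rw [Ssum_mul]
  rfl

theorem itS_selfAdjoint (χ : H →* Circle) (s : Finset H) (c : H → A) :
    ∀ n, IsSelfAdjoint (Ssum χ (itT s n) (itC s c n)) := by
  intro n
  induction n with
  | zero => rw [itS_zero]; exact IsSelfAdjoint.star_mul_self _
  | succ n ih =>
    rw [itS_succ]
    show star _ = _
    rw [star_mul, ih.star_eq]

theorem itS_norm (χ : H →* Circle) (s : Finset H) (c : H → A) :
    ∀ n, ‖Ssum χ (itT s n) (itC s c n)‖ = ‖Ssum χ s c‖ ^ 2 ^ (n + 1) := by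
  intro n
  induction n with
  | zero =>
    rw [itS_zero, CStarRing.norm_star_mul_self (x := Ssum χ s c)]
    ring
  | succ n ih =>
    have hsa := itS_selfAdjoint χ s c n
    have hmm := CStarRing.norm_star_mul_self (x := Ssum χ (itT s n) (itC s c n))
    rw [hsa.star_eq] at hmm
    rw [itS_succ, hmm, ih, ← pow_add]
    congr 1
    rw [pow_succ 2 (n + 1)]
    ring

theorem itT_eq (s : Finset H) : ∀ n, itT s n = (s⁻¹ * s) ^ 2 ^ n := by
  intro n
  induction n with
  | zero => rw [itT, pow_zero, pow_one]
  | succ n ih =>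
    show itT s n * itT s n = _
    rw [ih, ← pow_add, pow_succ 2 n, mul_two]

theorem itS_norm_le (χ : H →* Circle) (s : Finset H) {c : H → A}
    (hc : ∀ g, c g ∈ gr.part g) (n : ℕ) :
    ‖Ssum χ (itT s n) (itC s c n)‖ ≤
      ((itT s n).card : ℝ) * ‖Ssum (1 : H →* Circle) (itT s n) (itC s c n)‖ := by
  have h3 : ∀ k ∈ itT s n, ‖(χ k : ℂ) • itC s c n k‖ ≤
      ‖Ssum (1 : H →* Circle) (itT s n) (itC s c n)‖ := by
    intro k hk
    rw [norm_smul]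
    have h4 : ‖(χ k : ℂ)‖ = 1 := by
      rw [Circle.norm_coe]
    rw [h4, one_mul, Ssum_one]
    exact norm_comp_le gr (itC_mem gr hc s n) hk
  calc ‖Ssum χ (itT s n) (itC s c n)‖ ≤ ∑ k ∈ itT s n, ‖(χ k : ℂ) • itC s c n k‖ :=
        norm_sum_le _ _
    _ ≤ (itT s n).card • ‖Ssum (1 : H →* Circle) (itT s n) (itC s c n)‖ :=
        Finset.sum_le_card_nsmul _ _ _ h3
    _ = _ := by rw [nsmul_eq_mul]

theorem Ssum_norm_le (χ : H →* Circle) (s : Finset H) {c : H → A}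
    (hc : ∀ g, c g ∈ gr.part g) : ‖Ssum χ s c‖ ≤ ‖Ssum (1 : H →* Circle) s c‖ := by
  by_contra hlt
  push_neg at hlt
  set M := ‖Ssum (1 : H →* Circle) s c‖ with hMdef
  set q := ‖Ssum χ s c‖ with hqdef
  have hM0 : 0 ≤ M := norm_nonneg _
  set r := (s⁻¹ * s).card with hrdef
  have hcard : ∀ n : ℕ, ((itT s n).card : ℝ) ≤ ((2 : ℝ) ^ (n + 1)) ^ r := by
    intro n
    have h1 : (itT s n).card ≤ (2 ^ n + 1) ^ r := by
      rw [itT_eq]; exact card_pow_le _ _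
    calc ((itT s n).card : ℝ) ≤ (((2 ^ n + 1 : ℕ)) : ℝ) ^ r := by exact_mod_cast h1
      _ ≤ ((2 : ℝ) ^ (n + 1)) ^ r := by
          apply pow_le_pow_left₀ (by positivity)
          push_cast
          have h2 : (1 : ℝ) ≤ 2 ^ n := one_le_pow₀ (by norm_num)
          rw [pow_succ]
          nlinarith
  have key : ∀ n : ℕ, q ^ 2 ^ (n + 1) ≤ ((itT s n).card : ℝ) * M ^ 2 ^ (n + 1) := by
    intro n
    have h3 := itS_norm_le gr χ s hc n
    rwa [itS_norm χ s c n, itS_norm (1 : H →* Circle) s c n] at h3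
  rcases eq_or_lt_of_le hM0 with hM0' | hMpos
  · have hz : ∀ k ∈ s, c k = 0 := by
      intro k hk
      have h4 := norm_comp_le gr hc hk
      rw [← Ssum_one s c, ← hMdef, ← hM0'] at h4
      exact norm_le_zero_iff.mp h4
    have hq0 : q = 0 := by
      rw [hqdef]
      have : Ssum χ s c = 0 := by
        rw [Ssum]
        exact Finset.sum_eq_zero fun k hk => by rw [hz k hk, smul_zero]
      rw [this, norm_zero]
    linarith
  · set u := q / M with hu
    have hu1 : 1 < u := (one_lt_div hMpos).2 hlt
    have keyu : ∀ n : ℕ, u ^ 2 ^ (n + 1) ≤ ((2 : ℝ) ^ (n + 1)) ^ r := by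
      intro n
      rw [hu, div_pow, div_le_iff₀ (by positivity)]
      calc q ^ 2 ^ (n + 1) ≤ ((itT s n).card : ℝ) * M ^ 2 ^ (n + 1) := key n
        _ ≤ ((2 : ℝ) ^ (n + 1)) ^ r * M ^ 2 ^ (n + 1) :=
            mul_le_mul_of_nonneg_right (hcard n) (by positivity)
    have hv : (0 : ℝ) < u⁻¹ := by positivity
    have hv1 : u⁻¹ < 1 := inv_lt_one_of_one_lt₀ hu1
    have hlim := tendsto_pow_const_mul_const_pow_of_lt_one r hv.le hv1
    have hev := hlim.eventually (gt_mem_nhds one_pos)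
    obtain ⟨N, hN⟩ := Filter.eventually_atTop.mp hev
    have hm : N ≤ 2 ^ (N + 1) :=
      le_of_lt ((Nat.lt_two_pow_self (n := N)).trans_le (Nat.pow_le_pow_right (by norm_num) (Nat.le_succ N)))
    have h1 := hN (2 ^ (N + 1)) hm
    have h2 : u ^ 2 ^ (N + 1) ≤ (((2 : ℕ) ^ (N + 1) : ℕ) : ℝ) ^ r := by
      push_cast
      exact keyu N
    have h3 : (1 : ℝ) ≤ (((2 : ℕ) ^ (N + 1) : ℕ) : ℝ) ^ r * u⁻¹ ^ 2 ^ (N + 1) := by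
      have h4 := mul_le_mul_of_nonneg_right h2 (le_of_lt (pow_pos hv (2 ^ (N + 1))))
      rwa [← mul_pow, mul_inv_cancel₀ (by positivity), one_pow] at h4
    have h5 : ((2 ^ (N + 1) : ℕ) : ℝ) ^ r * u⁻¹ ^ 2 ^ (N + 1) < 1 := h1
    linarith

end Iter
section Phi
variable {H : Type*} [CommGroup H] [DecidableEq H]
variable {A : Type*} [NonUnitalCStarAlgebra A] [PartialOrder A] [StarOrderedRing A]
variable (gr : GradedCStar H A ⊤)

/-- the twisted sum map on the direct sum -/
noncomputable def Phi (χ : H →* Circle) : (⨁ g, gr.part g) →ₗ[ℂ] A :=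
  DirectSum.toModule ℂ H A fun g => (χ g : ℂ) • (gr.part g).subtype

theorem Phi_lof (χ : H →* Circle) (g : H) (x : gr.part g) :
    Phi gr χ (DirectSum.lof ℂ H (fun g => gr.part g) g x) = (χ g : ℂ) • (x : A) := by
  rw [Phi, DirectSum.toModule_lof]
  rfl

theorem Phi_apply [∀ (g : H) (x : gr.part g), Decidable (x ≠ 0)]
    (χ : H →* Circle) (x : ⨁ g, gr.part g) :
    Phi gr χ x = Ssum χ (DFinsupp.support x) fun g => ((x g : A)) := by
  conv_lhs => rw [← DirectSum.sum_support_of x]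
  rw [map_sum, Ssum]
  refine Finset.sum_congr rfl fun g _ => ?_
  rw [← DirectSum.lof_eq_of ℂ, Phi_lof]

theorem Ssum_twist_inv (χ : H →* Circle) (s : Finset H) (c : H → A) :
    Ssum χ⁻¹ s (fun g => (χ g : ℂ) • c g) = Ssum (1 : H →* Circle) s c := by
  rw [Ssum, Ssum]
  refine Finset.sum_congr rfl fun g _ => ?_
  rw [smul_smul, MonoidHom.inv_apply, Circle.coe_inv,
    inv_mul_cancel₀ (Circle.coe_ne_zero _)]
  simp

theorem Ssum_twist_one (χ : H →* Circle) (s : Finset H) (c : H → A) :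
    Ssum (1 : H →* Circle) s (fun g => (χ g : ℂ) • c g) = Ssum χ s c := by
  simp [Ssum]

theorem Ssum_norm_eq (χ : H →* Circle) (s : Finset H) {c : H → A}
    (hc : ∀ g, c g ∈ gr.part g) : ‖Ssum χ s c‖ = ‖Ssum (1 : H →* Circle) s c‖ := by
  refine le_antisymm (Ssum_norm_le gr χ s hc) ?_
  have hc' : ∀ g, (χ g : ℂ) • c g ∈ gr.part g := fun g => Submodule.smul_mem _ _ (hc g)
  have h1 := Ssum_norm_le gr χ⁻¹ s hc'
  rwa [Ssum_twist_inv, Ssum_twist_one] at h1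

theorem Phi_norm (χ : H →* Circle) (x : ⨁ g, gr.part g) :
    ‖Phi gr χ x‖ = ‖Phi gr (1 : H →* Circle) x‖ := by
  classical
  rw [Phi_apply, Phi_apply]
  exact Ssum_norm_eq gr χ _ fun g => SetLike.coe_mem (x g)

theorem Phi_one_injective : Function.Injective (Phi gr (1 : H →* Circle)) := by
  classical
  refine (injective_iff_map_eq_zero _).2 fun z hz => ?_
  refine DFinsupp.ext fun g => ?_
  by_contra hzg
  have hg : g ∈ DFinsupp.support z := DFinsupp.mem_support_iff.2 hzg
  have h1 := norm_comp_le gr (c := fun g => ((z g : A)))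
    (fun g => SetLike.coe_mem (z g)) hg
  rw [← Ssum_one, ← Phi_apply, hz, norm_zero] at h1
  exact hzg (by simpa using norm_le_zero_iff.mp h1)

theorem Phi_one_range :
    LinearMap.range (Phi gr (1 : H →* Circle)) = ⨆ g, gr.part g := by
  classical
  apply le_antisymm
  · rintro a ⟨x, rfl⟩
    rw [Phi_apply]
    refine Submodule.sum_mem _ fun g _ => ?_
    exact Submodule.mem_iSup_of_mem g (Submodule.smul_mem _ _ (SetLike.coe_mem (x g)))
  · refine iSup_le fun g a ha => ?_
    refine ⟨DirectSum.lof ℂ H (fun g => gr.part g) g ⟨a, ha⟩, ?_⟩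
    rw [Phi_lof]
    simp

theorem Phi_mul_exists (x y : ⨁ g, gr.part g) :
    ∃ z, ∀ χ : H →* Circle, Phi gr χ z = Phi gr χ x * Phi gr χ y := by
  classical
  have hc : ∀ g, ((x g : A)) ∈ gr.part g := fun g => SetLike.coe_mem _
  have hd : ∀ g, ((y g : A)) ∈ gr.part g := fun g => SetLike.coe_mem _
  refine ⟨∑ k ∈ DFinsupp.support x * DFinsupp.support y,
    DirectSum.lof ℂ H (fun g => gr.part g) k
      ⟨convF (DFinsupp.support x) (DFinsupp.support y) (fun g => (x g : A))
        (fun g => (y g : A)) k, convF_mem gr hc hd _ _ k⟩, fun χ => ?_⟩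
  rw [map_sum, Phi_apply gr χ x, Phi_apply gr χ y, Ssum_mul, Ssum]
  exact Finset.sum_congr rfl fun k _ => Phi_lof gr χ k _

theorem Phi_star_exists (x : ⨁ g, gr.part g) :
    ∃ z, ∀ χ : H →* Circle, Phi gr χ z = star (Phi gr χ x) := by
  classical
  have hc : ∀ g : H, star ((x g⁻¹ : A)) ∈ gr.part g := fun g => by
    have := gr.star_mem (SetLike.coe_mem (x g⁻¹))
    rwa [inv_inv] at this
  refine ⟨∑ k ∈ (DFinsupp.support x)⁻¹, DirectSum.lof ℂ H (fun g => gr.part g) k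
    ⟨star ((x k⁻¹ : A)), hc k⟩, fun χ => ?_⟩
  rw [map_sum, Phi_apply gr χ x, Ssum_star, Ssum]
  exact Finset.sum_congr rfl fun k _ => Phi_lof gr χ k _

theorem Phi_twist_exists (ψ : H →* Circle) (x : ⨁ g, gr.part g) :
    ∃ z, ∀ χ : H →* Circle, Phi gr χ z = Phi gr (χ * ψ) x := by
  classical
  refine ⟨∑ k ∈ DFinsupp.support x, DirectSum.lof ℂ H (fun g => gr.part g) k
      ⟨(ψ k : ℂ) • (x k : A), Submodule.smul_mem _ _ (SetLike.coe_mem _)⟩, fun χ => ?_⟩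
  rw [map_sum, Phi_apply gr (χ * ψ) x, Ssum]
  refine Finset.sum_congr rfl fun k _ => ?_
  rw [Phi_lof, smul_smul, MonoidHom.mul_apply, Circle.coe_mul]

end Phi
section Gam
variable {H : Type*} [CommGroup H] [DecidableEq H]
variable {A : Type*} [NonUnitalCStarAlgebra A] [PartialOrder A] [StarOrderedRing A]
variable (gr : GradedCStar H A ⊤)

theorem dense_range_phi :
    Dense ((LinearMap.range (Phi gr (1 : H →* Circle)) : Submodule ℂ A) : Set A) := by
  rw [Phi_one_range, Submodule.dense_iff_topologicalClosure_eq_top]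
  exact gr.span_dense

/-- linear equivalence onto the algebraic part -/
noncomputable def eqv : (⨁ g, gr.part g) ≃ₗ[ℂ] LinearMap.range (Phi gr (1 : H →* Circle)) :=
  LinearEquiv.ofInjective _ (Phi_one_injective gr)

theorem eqv_coe (x : ⨁ g, gr.part g) : ((eqv gr x : _) : A) = Phi gr (1 : H →* Circle) x :=
  rfl

/-- the twisted map on the algebraic part -/
noncomputable def gamma0 (χ : H →* Circle) :
    (LinearMap.range (Phi gr (1 : H →* Circle))) →L[ℂ] A :=
  LinearMap.mkContinuous ((Phi gr χ).comp (eqv gr).symm.toLinearMap) 1 (fun v => by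
    have h1 : Phi gr (1 : H →* Circle) ((eqv gr).symm v) = (v : A) := by
      rw [← eqv_coe, LinearEquiv.apply_symm_apply]
    have h2 : ((Phi gr χ).comp (eqv gr).symm.toLinearMap) v
        = Phi gr χ ((eqv gr).symm v) := rfl
    rw [one_mul, h2, Phi_norm gr χ, h1]
    exact le_rfl)

theorem gamma0_apply (χ : H →* Circle) (x : ⨁ g, gr.part g) :
    gamma0 gr χ (eqv gr x) = Phi gr χ x := by
  show ((Phi gr χ).comp (eqv gr).symm.toLinearMap) (eqv gr x) = Phi gr χ x
  show Phi gr χ ((eqv gr).symm (eqv gr x)) = Phi gr χ x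
  rw [LinearEquiv.symm_apply_apply]

theorem subtypeL_dense :
    DenseRange ((LinearMap.range (Phi gr (1 : H →* Circle))).subtypeL) := by
  have h1 : Set.range ((LinearMap.range (Phi gr (1 : H →* Circle))).subtypeL)
      = ((LinearMap.range (Phi gr (1 : H →* Circle)) : Submodule ℂ A) : Set A) :=
    Subtype.range_coe
  unfold DenseRange
  rw [h1]
  exact dense_range_phi gr

theorem subtypeL_ui :
    IsUniformInducing ((LinearMap.range (Phi gr (1 : H →* Circle))).subtypeL : _ →L[ℂ] A) :=
  isometry_subtype_coe.isUniformInducing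

/-- the extended twisted map -/
noncomputable def gam (χ : H →* Circle) : A →L[ℂ] A :=
  ContinuousLinearMap.extend (gamma0 gr χ)
    (LinearMap.range (Phi gr (1 : H →* Circle))).subtypeL

theorem gam_phi (χ : H →* Circle) (x : ⨁ g, gr.part g) :
    gam gr χ (Phi gr (1 : H →* Circle) x) = Phi gr χ x := by
  have h := ContinuousLinearMap.extend_eq (gamma0 gr χ)
    (e := (LinearMap.range (Phi gr (1 : H →* Circle))).subtypeL) (subtypeL_dense gr)
    (subtypeL_ui gr) (eqv gr x)
  rw [gamma0_apply] at h
  exact h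

theorem ext_dense {β : Type*} [TopologicalSpace β] [T2Space β] {f h : A → β}
    (hf : Continuous f) (hh : Continuous h)
    (heq : ∀ x : ⨁ g, gr.part g, f (Phi gr (1 : H →* Circle) x)
      = h (Phi gr (1 : H →* Circle) x)) : f = h := by
  apply Continuous.ext_on (dense_range_phi gr) hf hh
  rintro a ⟨x, rfl⟩
  exact heq x

theorem gam_norm (χ : H →* Circle) (a : A) : ‖gam gr χ a‖ = ‖a‖ := by
  refine congrFun (ext_dense gr (f := fun a => ‖gam gr χ a‖) (h := fun a => ‖a‖)
    ((gam gr χ).continuous.norm) continuous_norm (fun x => ?_)) a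
  show ‖gam gr χ (Phi gr (1 : H →* Circle) x)‖ = ‖Phi gr (1 : H →* Circle) x‖
  rw [gam_phi, Phi_norm]

theorem gam_comp (χ ψ : H →* Circle) (a : A) :
    gam gr χ (gam gr ψ a) = gam gr (χ * ψ) a := by
  refine congrFun (ext_dense gr (f := fun a => gam gr χ (gam gr ψ a))
    (h := fun a => gam gr (χ * ψ) a)
    ((gam gr χ).continuous.comp (gam gr ψ).continuous) (gam gr (χ * ψ)).continuous
    (fun x => ?_)) a
  obtain ⟨z, hz⟩ := Phi_twist_exists gr ψ x
  have h1 : Phi gr (1 : H →* Circle) z = Phi gr ψ x := by rw [hz, one_mul]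
  rw [gam_phi, ← h1, gam_phi, hz χ, gam_phi]

theorem gam_id (a : A) : gam gr (1 : H →* Circle) a = a := by
  refine congrFun (ext_dense gr (f := fun a => gam gr (1 : H →* Circle) a) (h := id)
    (gam gr (1 : H →* Circle)).continuous continuous_id (fun x => ?_)) a
  show gam gr (1 : H →* Circle) (Phi gr (1 : H →* Circle) x) = _
  rw [gam_phi]
  rfl

theorem gam_star (χ : H →* Circle) (a : A) : gam gr χ (star a) = star (gam gr χ a) := by
  refine congrFun (ext_dense gr (f := fun a => gam gr χ (star a))
    (h := fun a => star (gam gr χ a))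
    ((gam gr χ).continuous.comp continuous_star) ((gam gr χ).continuous.star)
    (fun x => ?_)) a
  obtain ⟨z, hz⟩ := Phi_star_exists gr x
  rw [← hz (1 : H →* Circle), gam_phi, gam_phi, hz χ]

theorem gam_mul (χ : H →* Circle) (a b : A) :
    gam gr χ (a * b) = gam gr χ a * gam gr χ b := by
  have step1 : ∀ (x : ⨁ g, gr.part g) (b : A),
      gam gr χ (Phi gr (1 : H →* Circle) x * b)
        = gam gr χ (Phi gr (1 : H →* Circle) x) * gam gr χ b := by
    intro x
    refine fun b => congrFun (ext_dense gr
      (f := fun b => gam gr χ (Phi gr (1 : H →* Circle) x * b))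
      (h := fun b => gam gr χ (Phi gr (1 : H →* Circle) x) * gam gr χ b)
      ((gam gr χ).continuous.comp (continuous_mul_left _))
      (continuous_const.mul (gam gr χ).continuous) (fun y => ?_)) b
    obtain ⟨z, hz⟩ := Phi_mul_exists gr x y
    rw [← hz (1 : H →* Circle), gam_phi, gam_phi, gam_phi, hz χ]
  refine congrFun (ext_dense gr (f := fun a => gam gr χ (a * b))
    (h := fun a => gam gr χ a * gam gr χ b)
    ((gam gr χ).continuous.comp (continuous_mul_right _))
    ((gam gr χ).continuous.mul continuous_const) (fun x => ?_)) a
  exact step1 x b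

theorem gam_part (χ : H →* Circle) {g : H} {a : A} (ha : a ∈ gr.part g) :
    gam gr χ a = (χ g : ℂ) • a := by
  have h1 : Phi gr (1 : H →* Circle) (DirectSum.lof ℂ H (fun g => gr.part g) g ⟨a, ha⟩)
      = a := by rw [Phi_lof]; simp
  conv_lhs => rw [← h1]
  rw [gam_phi, Phi_lof]

end Gam
section Dual
variable {H : Type*} [CommGroup H] [TopologicalSpace H]

/-- underlying monoid hom of a character -/
noncomputable def toMH (χ : PontryaginDual H) : H →* Circle :=
  ContinuousMonoidHom.toMonoidHom χ

theorem toMH_apply (χ : PontryaginDual H) (g : H) : toMH χ g = χ g := rfl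

theorem toMH_mul (χ₁ χ₂ : PontryaginDual H) : toMH (χ₁ * χ₂) = toMH χ₁ * toMH χ₂ := by
  ext g; rfl

theorem cont_eval (g : H) :
    Continuous fun χ : PontryaginDual H => ((χ g : Circle) : ℂ) := by
  have h2 : Continuous (ContinuousMonoidHom.toContinuousMap :
      PontryaginDual H → C(H, Circle)) :=
    (ContinuousMonoidHom.isInducing_toContinuousMap H Circle).continuous
  have h3 : Continuous fun f : C(H, Circle) => f g := continuous_eval_const g
  have h1 : Continuous fun χ : PontryaginDual H => (χ g : Circle) := h3.comp h2
  exact continuous_subtype_val.comp h1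

end Dual

section Main
variable {H : Type*} [CommGroup H] [TopologicalSpace H] [DecidableEq H]
variable {A : Type*} [NonUnitalCStarAlgebra A] [PartialOrder A] [StarOrderedRing A]
variable (gr : GradedCStar H A ⊤)

/-- the *-automorphism attached to a character -/
noncomputable def gamEquiv (χ : PontryaginDual H) : A ≃⋆ₐ[ℂ] A where
  toFun := gam gr (toMH χ)
  invFun := gam gr (toMH χ)⁻¹
  left_inv a := by rw [gam_comp, inv_mul_cancel, gam_id]
  right_inv a := by rw [gam_comp, mul_inv_cancel, gam_id]
  map_mul' := gam_mul gr _
  map_add' := map_add _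
  map_star' := gam_star gr _
  map_smul' r a := map_smul _ r a

theorem gamEquiv_apply (χ : PontryaginDual H) (a : A) :
    gamEquiv gr χ a = gam gr (toMH χ) a := rfl

theorem cont_on_sup {v : A} (hv : v ∈ ⨆ g, gr.part g) :
    Continuous fun χ : PontryaginDual H => gam gr (toMH χ) v := by
  refine Submodule.iSup_induction (motive := fun w =>
      Continuous fun χ : PontryaginDual H => gam gr (toMH χ) w) _ hv
    (fun g a ha => ?_) ?_ (fun x y hx hy => ?_)
  · show Continuous fun χ : PontryaginDual H => gam gr (toMH χ) a
    have h1 : (fun χ : PontryaginDual H => gam gr (toMH χ) a)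
        = fun χ : PontryaginDual H => ((χ g : Circle) : ℂ) • a :=
      funext fun χ => gam_part gr (toMH χ) ha
    rw [h1]
    exact (cont_eval g).smul continuous_const
  · show Continuous fun χ : PontryaginDual H => gam gr (toMH χ) (0 : A)
    have h1 : (fun χ : PontryaginDual H => gam gr (toMH χ) (0 : A))
        = fun _ : PontryaginDual H => (0 : A) := funext fun χ => map_zero _
    rw [h1]
    exact continuous_const
  · show Continuous fun χ : PontryaginDual H => gam gr (toMH χ) (x + y)
    have h1 : (fun χ : PontryaginDual H => gam gr (toMH χ) (x + y))
        = fun χ : PontryaginDual H => gam gr (toMH χ) x + gam gr (toMH χ) y :=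
      funext fun χ => map_add _ _ _
    rw [h1]
    exact hx.add hy

theorem cont_gam (a : A) :
    Continuous fun χ : PontryaginDual H => gam gr (toMH χ) a := by
  have hseq : ∀ n : ℕ, ∃ v, v ∈ LinearMap.range (Phi gr (1 : H →* Circle)) ∧
      dist a v < 1 / (n + 1) := by
    intro n
    obtain ⟨v, hv1, hv2⟩ := (dense_range_phi gr).exists_dist_lt a
      (ε := 1 / (n + 1)) (by positivity)
    exact ⟨v, hv1, hv2⟩
  choose u hu hud using hseq
  have hcontn : ∀ n, Continuous fun χ : PontryaginDual H => gam gr (toMH χ) (u n) := by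
    intro n
    have h1 : u n ∈ ⨆ g, gr.part g := by
      rw [← Phi_one_range gr]; exact hu n
    exact cont_on_sup gr h1
  have htu : TendstoUniformly (fun n (χ : PontryaginDual H) => gam gr (toMH χ) (u n))
      (fun χ : PontryaginDual H => gam gr (toMH χ) a) Filter.atTop := by
    rw [Metric.tendstoUniformly_iff]
    intro ε hε
    obtain ⟨N, hN⟩ := exists_nat_one_div_lt hε
    refine Filter.eventually_atTop.2 ⟨N, fun n hn χ => ?_⟩
    have h1 : dist (gam gr (toMH χ) a) (gam gr (toMH χ) (u n)) = dist a (u n) := by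
      rw [dist_eq_norm, dist_eq_norm, ← map_sub, gam_norm]
    rw [h1]
    calc dist a (u n) < 1 / (n + 1) := hud n
      _ ≤ 1 / (N + 1) := by
          apply one_div_le_one_div_of_le (by positivity)
          have : (N : ℝ) ≤ n := by exact_mod_cast hn
          linarith
      _ < ε := hN
  exact htu.continuous (Filter.Frequently.of_forall hcontn)

end Main

/-- given an `H`-grading of a C*-algebra `A` by a discrete abelian
group `H` (written multiplicatively), there is a unique strongly continuous action
`γ` of the Pontryagin dual `Ĥ` on `A` by *-automorphisms such that
`γ_χ(a) = χ(g) • a` for all `g ∈ H` and `a ∈ A_g`. -/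
theorem grading_gives_dual_action
    {H : Type*} [CommGroup H] [TopologicalSpace H] [DiscreteTopology H] [IsTopologicalGroup H]
    {A : Type*} [NonUnitalCStarAlgebra A] [PartialOrder A] [StarOrderedRing A]
    (gr : GradedCStar H A ⊤) :
    ∃! γ : PontryaginDual H → (A ≃⋆ₐ[ℂ] A),
      (∀ χ₁ χ₂ : PontryaginDual H, ∀ a : A, γ (χ₁ * χ₂) a = γ χ₁ (γ χ₂ a)) ∧
      (∀ a : A, Continuous fun χ : PontryaginDual H => γ χ a) ∧
      (∀ g : H, ∀ a ∈ gr.part g, ∀ χ : PontryaginDual H, γ χ a = (χ g : ℂ) • a) := by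
    classical
  refine ⟨fun χ => gamEquiv gr χ, ⟨?_, ?_, ?_⟩, ?_⟩
  · intro χ₁ χ₂ a
    rw [gamEquiv_apply, gamEquiv_apply, gamEquiv_apply, gam_comp, toMH_mul]
  · intro a
    have h1 : (fun χ : PontryaginDual H => gamEquiv gr χ a)
        = fun χ : PontryaginDual H => gam gr (toMH χ) a := rfl
    rw [h1]
    exact cont_gam gr a
  · intro g a ha χ
    rw [gamEquiv_apply]
    exact gam_part gr (toMH χ) ha
  · intro γ' hγ'
    obtain ⟨h1', h2', h3'⟩ := hγ'
    funext χ
    refine StarAlgEquiv.ext fun a => ?_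
    have hc1 : Continuous fun a : A => γ' χ a := (StarAlgEquiv.isometry (γ' χ)).continuous
    have hc2 : Continuous fun a : A => gamEquiv gr χ a :=
      (gam gr (toMH χ)).continuous
    have heq : (fun a : A => γ' χ a) = fun a : A => gamEquiv gr χ a := by
      refine Continuous.ext_on (dense_range_phi gr) hc1 hc2 ?_
      intro v hv
      obtain ⟨x, rfl⟩ := hv
      have hmem : Phi gr (1 : H →* Circle) x ∈ ⨆ g, gr.part g := by
        rw [← Phi_one_range gr]
        exact ⟨x, rfl⟩
      refine Submodule.iSup_induction (motive := fun w : A => γ' χ w = gamEquiv gr χ w)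
        _ hmem (fun g a ha => ?_) ?_ (fun x y hx hy => ?_)
      · show γ' χ a = gamEquiv gr χ a
        rw [h3' g a ha χ, gamEquiv_apply, gam_part gr (toMH χ) ha]
        rfl
      · show γ' χ (0 : A) = gamEquiv gr χ (0 : A)
        rw [map_zero, map_zero]
      · show γ' χ (x + y) = gamEquiv gr χ (x + y)
        have hx' : γ' χ x = gamEquiv gr χ x := hx
        have hy' : γ' χ y = gamEquiv gr χ y := hy
        rw [map_add, map_add, hx', hy']
    exact congrFun heq a
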